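/- Unconditional L² stability with interface unknowns and coarse-flux/fine-pressure matching: augment the one-dimensional composite finite volume scheme with additional interface unknowns p_{I+1/2}^{n,k} and p_{I+1/2}^{n}, interface fluxes u_{I+1/2}^{n,k} = (p_{I+1/2}^{n,k} − p_I^{n,k})/(x_{I+1/2} − x_I) and u_{I+1/2}^{n} = (p_{I+1}^{n} − p_{I+1/2}^{n})/(x_{I+1} − x_{I+1/2}), and interface conditions, for every n: δt₂ u_{I+1/2}^{n} = Σ_{k=1}^{𝒦} δt₁ u_{I+1/2}^{n,k} and p_{I+1/2}^{n,k} = p_{I+1/2}^{n} for all k. If all sources vanish (f_j^{n,k} = 0 and f_j^{n} = 0), then every solution satisfies Σ_{j ≤ I} h_j (p_j^{N₂,𝒦})² + Σ_{j > I} h_j (p_j^{N₂})² ≤ Σ_{j=1}^{J} h_j (p_j^{0})², with no restriction on the sizes of δt₁, δt₂ or the cell widths. -/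

import Mathlib

open Finset

/-- Cell center `x_j = (x_{j-1/2} + x_{j+1/2})/2`, where `xh j` denotes `x_{j+1/2}`
(so `xh 0 = x_{1/2}`, …, `xh J = x_{J+1/2}`). -/
noncomputable def xc (xh : ℕ → ℝ) (j : ℕ) : ℝ := (xh (j - 1) + xh j) / 2

/-- Cell width `h_j = x_{j+1/2} − x_{j−1/2}`. -/
noncomputable def hw (xh : ℕ → ℝ) (j : ℕ) : ℝ := xh j - xh (j - 1)

/-- The previous fine-time value `p_j^{n,k−1}`, with the conventions
`p_j^{n,0} = p_j^{n−1,𝒦}` and `p_j^{1,0} = p_j^0`. -/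
def prevF (K : ℕ) (p0 : ℕ → ℝ) (p1 : ℕ → ℕ → ℕ → ℝ) (n k j : ℕ) : ℝ :=
  if k = 1 then (if n = 1 then p0 j else p1 (n - 1) K j) else p1 n (k - 1) j

/-- The previous coarse-time value `p_j^{n−1}`, with the convention `p_j^0 = p_j^0`. -/
def prevC (p0 : ℕ → ℝ) (p2 : ℕ → ℕ → ℝ) (n j : ℕ) : ℝ :=
  if n = 1 then p0 j else p2 (n - 1) j

/-- Fine fluxes `u_{j+1/2}^{n,k}` for face indices `j = 0,…,I`:
`u_{1/2}^{n,k} = p_1^{n,k}/(x_1 − x_{1/2})`,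
`u_{j+1/2}^{n,k} = (p_{j+1}^{n,k} − p_j^{n,k})/(x_{j+1} − x_j)` for `1 ≤ j < I`, and the
interface flux `u_{I+1/2}^{n,k} = (p_{I+1/2}^{n,k} − p_I^{n,k})/(x_{I+1/2} − x_I)`,
where `q1 n k` denotes the interface unknown `p_{I+1/2}^{n,k}`. -/
noncomputable def uF (I : ℕ) (xh : ℕ → ℝ) (p1 : ℕ → ℕ → ℕ → ℝ) (q1 : ℕ → ℕ → ℝ)
    (n k j : ℕ) : ℝ :=
  if j = 0 then p1 n k 1 / (xc xh 1 - xh 0)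
  else if j < I then (p1 n k (j + 1) - p1 n k j) / (xc xh (j + 1) - xc xh j)
  else (q1 n k - p1 n k I) / (xh I - xc xh I)

/-- Coarse fluxes `u_{j+1/2}^{n}` for face indices `j = I,…,J`:
the interface flux `u_{I+1/2}^{n} = (p_{I+1}^{n} − p_{I+1/2}^{n})/(x_{I+1} − x_{I+1/2})`
(where `q2 n` denotes the interface unknown `p_{I+1/2}^{n}`),
`u_{j+1/2}^{n} = (p_{j+1}^{n} − p_j^{n})/(x_{j+1} − x_j)` for `I < j < J`, and
`u_{J+1/2}^{n} = −p_J^{n}/(x_{J+1/2} − x_J)`. -/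
noncomputable def uC (I J : ℕ) (xh : ℕ → ℝ) (p2 : ℕ → ℕ → ℝ) (q2 : ℕ → ℝ)
    (n j : ℕ) : ℝ :=
  if j = J then -(p2 n J) / (xh J - xc xh J)
  else if I < j then (p2 n (j + 1) - p2 n j) / (xc xh (j + 1) - xc xh j)
  else (p2 n (I + 1) - q2 n) / (xc xh (I + 1) - xh I)

/-- The interior scheme equations of the one-dimensional composite finite volume scheme:
`(h_j/δt₁)(p_j^{n,k} − p_j^{n,k−1}) − (u_{j+1/2}^{n,k} − u_{j−1/2}^{n,k}) = h_j f_j^{n,k}`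
for `j = 1,…,I`, `n = 1,…,N₂`, `k = 1,…,𝒦`, and
`(h_j/δt₂)(p_j^{n} − p_j^{n−1}) − (u_{j+1/2}^{n} − u_{j−1/2}^{n}) = h_j f_j^{n}`
for `j = I+1,…,J`, `n = 1,…,N₂`. -/
def SchemeEqs (J I K N2 : ℕ) (δt1 δt2 : ℝ) (xh : ℕ → ℝ)
    (p0 : ℕ → ℝ) (f1 : ℕ → ℕ → ℕ → ℝ) (f2 : ℕ → ℕ → ℝ)
    (p1 : ℕ → ℕ → ℕ → ℝ) (p2 : ℕ → ℕ → ℝ) (q1 : ℕ → ℕ → ℝ) (q2 : ℕ → ℝ) : Prop :=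
  (∀ n ∈ Icc 1 N2, ∀ k ∈ Icc 1 K, ∀ j ∈ Icc 1 I,
      (hw xh j / δt1) * (p1 n k j - prevF K p0 p1 n k j)
        - (uF I xh p1 q1 n k j - uF I xh p1 q1 n k (j - 1)) = hw xh j * f1 n k j)
  ∧ (∀ n ∈ Icc 1 N2, ∀ j ∈ Icc (I + 1) J,
      (hw xh j / δt2) * (p2 n j - prevC p0 p2 n j)
        - (uC I J xh p2 q2 n j - uC I J xh p2 q2 n (j - 1)) = hw xh j * f2 n j)

/-- Interface conditions with interface unknowns and coarse-flux/fine-pressure matching: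
`δt₂ u_{I+1/2}^{n} = ∑_{k=1}^{𝒦} δt₁ u_{I+1/2}^{n,k}` and
`p_{I+1/2}^{n,k} = p_{I+1/2}^{n}` for all `k`. -/
def InterfaceCoarseFlux (J I K N2 : ℕ) (δt1 δt2 : ℝ) (xh : ℕ → ℝ)
    (p1 : ℕ → ℕ → ℕ → ℝ) (p2 : ℕ → ℕ → ℝ) (q1 : ℕ → ℕ → ℝ) (q2 : ℕ → ℝ) : Prop :=
  ∀ n ∈ Icc 1 N2,
    δt2 * uC I J xh p2 q2 n I = ∑ k ∈ Icc 1 K, δt1 * uF I xh p1 q1 n k I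
    ∧ ∀ k ∈ Icc 1 K, q1 n k = q2 n


/-- Upward summation-by-parts inequality for the fine region. -/
lemma sbp_up (u p : ℕ → ℝ) (m : ℕ) (hm : 1 ≤ m)
    (h0 : 0 ≤ u 0 * p 1)
    (hmid : ∀ j, 1 ≤ j → j < m → 0 ≤ u j * (p (j + 1) - p j)) :
    ∑ j ∈ Finset.Icc 1 m, (u j - u (j - 1)) * p j ≤ u m * p m := by
  induction m, hm using Nat.le_induction with
  | base =>
    simp only [Finset.Icc_self, Finset.sum_singleton]
    norm_num
    nlinarith [h0]
  | succ m hm ih =>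
    rw [Finset.sum_Icc_succ_top (by omega : 1 ≤ m + 1)]
    have h1 := ih (fun j hj hjm => hmid j hj (by omega))
    have h2 := hmid m (by omega) (by omega)
    have hms : m + 1 - 1 = m := by omega
    rw [hms]
    nlinarith

/-- Downward summation-by-parts inequality for the coarse region. -/
lemma sbp_down (u p : ℕ → ℝ) (J : ℕ) :
    ∀ t a, a + t = J → 1 ≤ a →
    u J * p J ≤ 0 →
    (∀ j, a ≤ j → j < J → 0 ≤ u j * (p (j + 1) - p j)) →
    ∑ j ∈ Finset.Icc a J, (u j - u (j - 1)) * p j ≤ -(u (a - 1) * p a)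
  | 0, a, hat, ha, htop, hmid => by
      have haJ : a = J := by omega
      subst haJ
      simp only [Finset.Icc_self, Finset.sum_singleton]
      nlinarith
  | (t+1), a, hat, ha, htop, hmid => by
      have hsplit : Finset.Icc a J = insert a (Finset.Icc (a+1) J) := by
        ext x; simp only [Finset.mem_Icc, Finset.mem_insert]; omega
      rw [hsplit, Finset.sum_insert (by simp)]
      have ih := sbp_down u p J t (a+1) (by omega) (by omega) htop
        (fun j hj hjJ => hmid j (by omega) hjJ)
      have h2 := hmid a (le_refl a) (by omega)
      rw [show a + 1 - 1 = a by omega] at ih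
      nlinarith

/-- Unconditional `L²` stability with interface unknowns and coarse-flux/fine-pressure
matching: if all sources vanish, every solution satisfies
`∑_{j ≤ I} h_j (p_j^{N₂,𝒦})² + ∑_{j > I} h_j (p_j^{N₂})² ≤ ∑_{j=1}^{J} h_j (p_j^0)²`,
with no restriction on the sizes of `δt₁`, `δt₂` or the cell widths. -/
theorem stability_interface_unknowns_coarse_flux
    (J I K N2 : ℕ) (hJ : 3 ≤ J) (hI1 : 1 ≤ I) (hIJ : I < J) (hK : 1 ≤ K) (hN2 : 1 ≤ N2)
    (δt1 : ℝ) (hδt1 : 0 < δt1) (δt2 : ℝ) (hδt2 : δt2 = (K : ℝ) * δt1)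
    (xh : ℕ → ℝ) (hx0 : xh 0 = 0) (hxmono : ∀ j < J, xh j < xh (j + 1))
    (p0 : ℕ → ℝ)
    (p1 : ℕ → ℕ → ℕ → ℝ) (p2 : ℕ → ℕ → ℝ) (q1 : ℕ → ℕ → ℝ) (q2 : ℕ → ℝ)
    (hscheme : SchemeEqs J I K N2 δt1 δt2 xh p0 (fun _ _ _ => 0) (fun _ _ => 0) p1 p2 q1 q2)
    (hinterface : InterfaceCoarseFlux J I K N2 δt1 δt2 xh p1 p2 q1 q2) :
    ∑ j ∈ Icc 1 I, hw xh j * (p1 N2 K j) ^ 2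
      + ∑ j ∈ Icc (I + 1) J, hw xh j * (p2 N2 j) ^ 2
      ≤ ∑ j ∈ Icc 1 J, hw xh j * (p0 j) ^ 2 := by
  obtain ⟨hfine, hcoarse⟩ := hscheme
  have hδt1ne : δt1 ≠ 0 := ne_of_gt hδt1
  have hδt2pos : 0 < δt2 := by
    rw [hδt2]
    have h1 : (1:ℝ) ≤ (K:ℝ) := by exact_mod_cast hK
    nlinarith
  have hδt2ne : δt2 ≠ 0 := ne_of_gt hδt2pos
  have hwpos : ∀ j, 1 ≤ j → j ≤ J → 0 < hw xh j := by
    intro j h1 h2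
    have h := hxmono (j - 1) (by omega)
    rw [show j - 1 + 1 = j by omega] at h
    simpa [hw] using sub_pos.mpr h
  have hden0 : 0 < xc xh 1 - xh 0 := by
    have h := hxmono 0 (by omega)
    simp only [xc, show (1:ℕ) - 1 = 0 from rfl]
    linarith
  have hdenmid : ∀ j, 1 ≤ j → j < J → 0 < xc xh (j + 1) - xc xh j := by
    intro j h1 h2
    have ha := hxmono j h2
    have hb := hxmono (j - 1) (by omega)
    rw [show j - 1 + 1 = j by omega] at hb
    simp only [xc, Nat.add_sub_cancel]
    linarith
  have hdenI : 0 < xh I - xc xh I := by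
    have hb := hxmono (I - 1) (by omega)
    rw [show I - 1 + 1 = I by omega] at hb
    simp only [xc]
    linarith
  have hdenI2 : 0 < xc xh (I + 1) - xh I := by
    have := hxmono I hIJ
    simp only [xc, Nat.add_sub_cancel]
    linarith
  have hdenJ : 0 < xh J - xc xh J := by
    have hb := hxmono (J - 1) (by omega)
    rw [show J - 1 + 1 = J by omega] at hb
    simp only [xc]
    linarith
  -- per fine time step energy inequality
  have fineStep : ∀ n ∈ Icc 1 N2, ∀ k ∈ Icc 1 K,
      ∑ j ∈ Icc 1 I, hw xh j * (p1 n k j) ^ 2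
        ≤ ∑ j ∈ Icc 1 I, hw xh j * (prevF K p0 p1 n k j) ^ 2
          + 2 * δt1 * (q2 n * uF I xh p1 q1 n k I) := by
    intro n hn k hk
    have hA : ∑ j ∈ Icc 1 I, hw xh j * (p1 n k j) ^ 2
        ≤ ∑ j ∈ Icc 1 I, (hw xh j * (prevF K p0 p1 n k j) ^ 2
            + 2 * δt1 * ((uF I xh p1 q1 n k j - uF I xh p1 q1 n k (j - 1)) * p1 n k j)) := by
      apply Finset.sum_le_sum
      intro j hj
      have hj' := Finset.mem_Icc.mp hj
      have heq := hfine n hn k hk j hj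
      rw [mul_zero] at heq
      have key : hw xh j * (p1 n k j - prevF K p0 p1 n k j)
          = δt1 * (uF I xh p1 q1 n k j - uF I xh p1 q1 n k (j - 1)) := by
        field_simp at heq
        linarith
      have hwj := hwpos j hj'.1 (by omega)
      have key2 : 2 * δt1 * ((uF I xh p1 q1 n k j - uF I xh p1 q1 n k (j - 1)) * p1 n k j)
          = 2 * (hw xh j * (p1 n k j - prevF K p0 p1 n k j)) * p1 n k j := by
        linear_combination (-2 * p1 n k j) * key
      nlinarith [sq_nonneg (p1 n k j - prevF K p0 p1 n k j)]
    rw [Finset.sum_add_distrib, ← Finset.mul_sum] at hA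
    have hS := sbp_up (fun j => uF I xh p1 q1 n k j) (p1 n k) I hI1
      (by
        have hu0 : uF I xh p1 q1 n k 0 = p1 n k 1 / (xc xh 1 - xh 0) := by simp [uF]
        show 0 ≤ uF I xh p1 q1 n k 0 * p1 n k 1
        rw [hu0]
        have he : p1 n k 1 / (xc xh 1 - xh 0) * p1 n k 1
            = (p1 n k 1) ^ 2 / (xc xh 1 - xh 0) := by ring
        rw [he]
        exact div_nonneg (sq_nonneg _) hden0.le)
      (by
        intro j hj1 hjI
        have hu : uF I xh p1 q1 n k j
            = (p1 n k (j+1) - p1 n k j) / (xc xh (j+1) - xc xh j) := by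
          simp only [uF, if_neg (by omega : ¬ j = 0), if_pos hjI]
        show 0 ≤ uF I xh p1 q1 n k j * (p1 n k (j+1) - p1 n k j)
        rw [hu]
        have hd := hdenmid j hj1 (by omega)
        have he : (p1 n k (j+1) - p1 n k j) / (xc xh (j+1) - xc xh j) * (p1 n k (j+1) - p1 n k j)
            = (p1 n k (j+1) - p1 n k j) ^ 2 / (xc xh (j+1) - xc xh j) := by ring
        rw [he]
        exact div_nonneg (sq_nonneg _) hd.le)
    have hq : q1 n k = q2 n := (hinterface n hn).2 k hk
    have huI : uF I xh p1 q1 n k I = (q2 n - p1 n k I) / (xh I - xc xh I) := by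
      simp only [uF, if_neg (by omega : ¬ I = 0), if_neg (lt_irrefl I), hq]
    have hS2 : uF I xh p1 q1 n k I * p1 n k I ≤ q2 n * uF I xh p1 q1 n k I := by
      rw [huI]
      have h1 : 0 ≤ (q2 n - p1 n k I) * (q2 n - p1 n k I) / (xh I - xc xh I) :=
        div_nonneg (mul_self_nonneg _) hdenI.le
      have h2 : q2 n * ((q2 n - p1 n k I) / (xh I - xc xh I))
          - (q2 n - p1 n k I) / (xh I - xc xh I) * p1 n k I
          = (q2 n - p1 n k I) * (q2 n - p1 n k I) / (xh I - xc xh I) := by ring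
      linarith
    have hfin : ∑ j ∈ Icc 1 I, (uF I xh p1 q1 n k j - uF I xh p1 q1 n k (j - 1)) * p1 n k j
        ≤ q2 n * uF I xh p1 q1 n k I := le_trans hS hS2
    have := mul_le_mul_of_nonneg_left hfin (by positivity : (0:ℝ) ≤ 2 * δt1)
    linarith
  -- per coarse time step energy inequality
  have coarseStep : ∀ n ∈ Icc 1 N2,
      ∑ j ∈ Icc (I + 1) J, hw xh j * (p2 n j) ^ 2
        ≤ ∑ j ∈ Icc (I + 1) J, hw xh j * (prevC p0 p2 n j) ^ 2
          - 2 * δt2 * (q2 n * uC I J xh p2 q2 n I) := by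
    intro n hn
    have hA : ∑ j ∈ Icc (I + 1) J, hw xh j * (p2 n j) ^ 2
        ≤ ∑ j ∈ Icc (I + 1) J, (hw xh j * (prevC p0 p2 n j) ^ 2
            + 2 * δt2 * ((uC I J xh p2 q2 n j - uC I J xh p2 q2 n (j - 1)) * p2 n j)) := by
      apply Finset.sum_le_sum
      intro j hj
      have hj' := Finset.mem_Icc.mp hj
      have heq := hcoarse n hn j hj
      rw [mul_zero] at heq
      have key : hw xh j * (p2 n j - prevC p0 p2 n j)
          = δt2 * (uC I J xh p2 q2 n j - uC I J xh p2 q2 n (j - 1)) := by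
        field_simp at heq
        linarith
      have hwj := hwpos j (by omega) hj'.2
      have key2 : 2 * δt2 * ((uC I J xh p2 q2 n j - uC I J xh p2 q2 n (j - 1)) * p2 n j)
          = 2 * (hw xh j * (p2 n j - prevC p0 p2 n j)) * p2 n j := by
        linear_combination (-2 * p2 n j) * key
      nlinarith [sq_nonneg (p2 n j - prevC p0 p2 n j)]
    rw [Finset.sum_add_distrib, ← Finset.mul_sum] at hA
    have hS := sbp_down (fun j => uC I J xh p2 q2 n j) (p2 n) J (J - (I + 1)) (I + 1)
      (by omega) (by omega)
      (by
        have hu : uC I J xh p2 q2 n J = -(p2 n J) / (xh J - xc xh J) := by simp [uC]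
        show uC I J xh p2 q2 n J * p2 n J ≤ 0
        rw [hu]
        have h1 : 0 ≤ (p2 n J) ^ 2 / (xh J - xc xh J) :=
          div_nonneg (sq_nonneg _) hdenJ.le
        have h2 : -(p2 n J) / (xh J - xc xh J) * p2 n J
            = -((p2 n J) ^ 2 / (xh J - xc xh J)) := by ring
        linarith)
      (by
        intro j hj1 hjJ
        have hu : uC I J xh p2 q2 n j
            = (p2 n (j+1) - p2 n j) / (xc xh (j+1) - xc xh j) := by
          simp only [uC, if_neg (by omega : ¬ j = J), if_pos (by omega : I < j)]
        show 0 ≤ uC I J xh p2 q2 n j * (p2 n (j+1) - p2 n j)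
        rw [hu]
        have hd := hdenmid j (by omega) hjJ
        have he : (p2 n (j+1) - p2 n j) / (xc xh (j+1) - xc xh j) * (p2 n (j+1) - p2 n j)
            = (p2 n (j+1) - p2 n j) ^ 2 / (xc xh (j+1) - xc xh j) := by ring
        rw [he]
        exact div_nonneg (sq_nonneg _) hd.le)
    rw [show I + 1 - 1 = I by omega] at hS
    have huI : uC I J xh p2 q2 n I = (p2 n (I + 1) - q2 n) / (xc xh (I + 1) - xh I) := by
      simp only [uC, if_neg (by omega : ¬ I = J), if_neg (lt_irrefl I)]
    have hS2 : -(uC I J xh p2 q2 n I * p2 n (I + 1)) ≤ -(q2 n * uC I J xh p2 q2 n I) := by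
      rw [huI]
      have h1 : 0 ≤ (p2 n (I + 1) - q2 n) * (p2 n (I + 1) - q2 n) / (xc xh (I + 1) - xh I) :=
        div_nonneg (mul_self_nonneg _) hdenI2.le
      have h2 : (p2 n (I + 1) - q2 n) / (xc xh (I + 1) - xh I) * p2 n (I + 1)
          - q2 n * ((p2 n (I + 1) - q2 n) / (xc xh (I + 1) - xh I))
          = (p2 n (I + 1) - q2 n) * (p2 n (I + 1) - q2 n) / (xc xh (I + 1) - xh I) := by ring
      linarith
    have hfin : ∑ j ∈ Icc (I + 1) J, (uC I J xh p2 q2 n j - uC I J xh p2 q2 n (j - 1)) * p2 n j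
        ≤ -(q2 n * uC I J xh p2 q2 n I) := le_trans hS hS2
    have := mul_le_mul_of_nonneg_left hfin (by positivity : (0:ℝ) ≤ 2 * δt2)
    linarith
  -- telescope over the fine steps within a coarse step
  have kTel : ∀ n ∈ Icc 1 N2, ∀ m, 1 ≤ m → m ≤ K →
      ∑ j ∈ Icc 1 I, hw xh j * (p1 n m j) ^ 2
        ≤ ∑ j ∈ Icc 1 I, hw xh j * (prevF K p0 p1 n 1 j) ^ 2
          + 2 * q2 n * ∑ k ∈ Icc 1 m, δt1 * uF I xh p1 q1 n k I := by
    intro n hn m hm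
    induction m, hm using Nat.le_induction with
    | base =>
      intro _
      have h1 := fineStep n hn 1 (Finset.mem_Icc.mpr ⟨le_refl 1, hK⟩)
      rw [Finset.Icc_self, Finset.sum_singleton]
      have e : 2 * q2 n * (δt1 * uF I xh p1 q1 n 1 I)
          = 2 * δt1 * (q2 n * uF I xh p1 q1 n 1 I) := by ring
      linarith
    | succ m hm ih =>
      intro hmK
      have h1 := fineStep n hn (m + 1) (Finset.mem_Icc.mpr ⟨by omega, hmK⟩)
      have hprev : ∀ j, prevF K p0 p1 n (m + 1) j = p1 n m j := by
        intro j
        simp [prevF, show m ≠ 0 by omega]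
      simp only [hprev] at h1
      have h2 := ih (by omega)
      rw [Finset.sum_Icc_succ_top (by omega : 1 ≤ m + 1)]
      have e : 2 * q2 n * (∑ k ∈ Icc 1 m, δt1 * uF I xh p1 q1 n k I
            + δt1 * uF I xh p1 q1 n (m + 1) I)
          = 2 * q2 n * ∑ k ∈ Icc 1 m, δt1 * uF I xh p1 q1 n k I
            + 2 * δt1 * (q2 n * uF I xh p1 q1 n (m + 1) I) := by ring
      linarith
  -- combined coarse step inequality
  have stepIneq : ∀ n ∈ Icc 1 N2,
      ∑ j ∈ Icc 1 I, hw xh j * (p1 n K j) ^ 2 + ∑ j ∈ Icc (I + 1) J, hw xh j * (p2 n j) ^ 2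
        ≤ ∑ j ∈ Icc 1 I, hw xh j * (prevF K p0 p1 n 1 j) ^ 2
          + ∑ j ∈ Icc (I + 1) J, hw xh j * (prevC p0 p2 n j) ^ 2 := by
    intro n hn
    have h1 := kTel n hn K hK le_rfl
    have h2 := coarseStep n hn
    have h3 := (hinterface n hn).1
    have e : 2 * q2 n * ∑ k ∈ Icc 1 K, δt1 * uF I xh p1 q1 n k I
        = 2 * δt2 * (q2 n * uC I J xh p2 q2 n I) := by rw [← h3]; ring
    linarith
  -- split initial sum
  have hsplit : ∑ j ∈ Icc 1 I, hw xh j * (p0 j) ^ 2 + ∑ j ∈ Icc (I + 1) J, hw xh j * (p0 j) ^ 2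
      = ∑ j ∈ Icc 1 J, hw xh j * (p0 j) ^ 2 := by
    rw [show Icc 1 I = Ioc 0 I from Finset.Icc_add_one_left_eq_Ioc 0 I,
        show Icc (I + 1) J = Ioc I J from Finset.Icc_add_one_left_eq_Ioc I J,
        show Icc 1 J = Ioc 0 J from Finset.Icc_add_one_left_eq_Ioc 0 J]
    exact Finset.sum_Ioc_consecutive _ (Nat.zero_le I) (le_of_lt hIJ)
  -- telescope over coarse steps
  have main : ∀ n, 1 ≤ n → n ≤ N2 →
      ∑ j ∈ Icc 1 I, hw xh j * (p1 n K j) ^ 2 + ∑ j ∈ Icc (I + 1) J, hw xh j * (p2 n j) ^ 2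
        ≤ ∑ j ∈ Icc 1 J, hw xh j * (p0 j) ^ 2 := by
    intro n hn
    induction n, hn using Nat.le_induction with
    | base =>
      intro h1N
      have h := stepIneq 1 (Finset.mem_Icc.mpr ⟨le_refl 1, h1N⟩)
      simp only [prevF, prevC, if_true, eq_self_iff_true, ite_true] at h
      linarith
    | succ n hn ih =>
      intro hnN
      have h := stepIneq (n + 1) (Finset.mem_Icc.mpr ⟨by omega, hnN⟩)
      have hp1 : ∀ j, prevF K p0 p1 (n + 1) 1 j = p1 n K j := by
        intro j
        simp [prevF, show n ≠ 0 by omega]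
      have hp2 : ∀ j, prevC p0 p2 (n + 1) j = p2 n j := by
        intro j
        simp [prevC, show n ≠ 0 by omega]
      simp only [hp1, hp2] at h
      have h2 := ih (by omega)
      linarith
  exact main N2 hN2 le_rfl
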